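/- (Corollary, Homogeneous Setting, part 1: Normalization Property.) Suppose the service rates are homogeneous, i.e. ν_i = ν > 0 for all i = 1,…,N. Then for the CPU algorithm iterates, the normalization is exact at every iteration: Σ_{m∈C_n} p_n^{k}(m) = 1 for every iteration k ≥ 1 and every layer 0 ≤ n ≤ N. -/

import Mathlib

open Finset Filter

/-- Number of busy units in state `B`. -/
def wt {N : ℕ} (B : Fin N → Bool) : ℕ := (Finset.univ.filter fun i => B i = true).card

/-- The layer `C_n`: states with exactly `n` busy units. -/
def layer (N n : ℕ) : Finset (Fin N → Bool) := Finset.univ.filter fun B => wt B = n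

/-- The full state: all units busy. -/
def fullState (N : ℕ) : Fin N → Bool := fun _ => true

/-- Unit `i` is the most preferred free unit at node `j` in state `l`
(ranks are given by the permutation `ζ j`). -/
def dispatched {N J : ℕ} (ζ : Fin J → (Fin N ≃ Fin N)) (l : Fin N → Bool) (j : Fin J)
    (i : Fin N) : Prop :=
  l i = false ∧ ∀ h : Fin N, (h : ℕ) < ((ζ j).symm i : ℕ) → l ((ζ j) h) = true

instance {N J : ℕ} (ζ : Fin J → (Fin N ≃ Fin N)) (l : Fin N → Bool) (j : Fin J) (i : Fin N) :
    Decidable (dispatched ζ l j i) := by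
  unfold dispatched; infer_instance

/-- Upward transition rate `λ_{lm}`: nonzero only if `m` arises from `l` by flipping
one coordinate `i` from free to busy, in which case it is `λ` times the total demand
fraction of the nodes dispatching unit `i` in state `l`. -/
noncomputable def upRate {N J : ℕ} (lam : ℝ) (f : Fin J → ℝ) (ζ : Fin J → (Fin N ≃ Fin N))
    (l m : Fin N → Bool) : ℝ :=
  ∑ i : Fin N,
    if l i = false ∧ m = Function.update l i true then
      lam * ∑ j : Fin J, if dispatched ζ l j i then f j else 0
    else 0

/-- Downward transition rate `μ_{lm}`: nonzero only if `m` arises from `l` by flipping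
one coordinate `i` from busy to free, in which case it is `ν i`. -/
noncomputable def downRate {N : ℕ} (ν : Fin N → ℝ) (l m : Fin N → Bool) : ℝ :=
  ∑ i : Fin N, if l i = true ∧ m = Function.update l i false then ν i else 0

/-- Total upward rate `λ_m = Σ_l λ_{ml}` out of state `m`. -/
noncomputable def totalUp {N J : ℕ} (lam : ℝ) (f : Fin J → ℝ) (ζ : Fin J → (Fin N ≃ Fin N))
    (m : Fin N → Bool) : ℝ :=
  ∑ l : Fin N → Bool, upRate lam f ζ m l

/-- Total service completion rate `μ_m = Σ_{i busy} ν i` out of state `m`. -/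
noncomputable def totalDown {N : ℕ} (ν : Fin N → ℝ) (m : Fin N → Bool) : ℝ :=
  ∑ i : Fin N, if m i = true then ν i else 0

/-- `C^m_n`: the states of layer `n` at Hamming distance 1 from `m`. -/
def adjLayer {N : ℕ} (n : ℕ) (m : Fin N → Bool) : Finset (Fin N → Bool) :=
  (layer N n).filter fun l => (Finset.univ.filter fun i => l i ≠ m i).card = 1

/-- `λ^k(n) = Σ_{m ∈ C_n} p_n^k(m) · λ_m`. -/
noncomputable def lamI {N J : ℕ} (lam : ℝ) (f : Fin J → ℝ) (ζ : Fin J → (Fin N ≃ Fin N))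
    (pI : ℕ → ℕ → (Fin N → Bool) → ℝ) (k n : ℕ) : ℝ :=
  ∑ m ∈ layer N n, pI k n m * totalUp lam f ζ m

/-- `μ^k(n) = Σ_{m ∈ C_n} p_n^k(m) · μ_m`. -/
noncomputable def muI {N : ℕ} (ν : Fin N → ℝ) (pI : ℕ → ℕ → (Fin N → Bool) → ℝ) (k n : ℕ) : ℝ :=
  ∑ m ∈ layer N n, pI k n m * totalDown ν m

/-- `μ^{k,r}(n) = Σ_{m ∈ C_n} p_n^{k,r}(m) · μ_m`. -/
noncomputable def muR {N : ℕ} (ν : Fin N → ℝ) (pR : ℕ → ℕ → ℕ → (Fin N → Bool) → ℝ)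
    (k n r : ℕ) : ℝ :=
  ∑ m ∈ layer N n, pR k n r m * totalDown ν m

/-- The iterates of the CPU (Conditional Probability Update) algorithm:
`pI k n m` is the converged outer iterate `p_n^k(m)` and `pR k n r m` is the inner
iterate `p_n^{k,r}(m)`.  The converged value `p_n^k` is by definition the limit of
the inner iterates as `r → ∞`. -/
def IsCPUIterates {N J : ℕ} (lam : ℝ) (f : Fin J → ℝ) (ζ : Fin J → (Fin N ≃ Fin N))
    (ν : Fin N → ℝ) (pI : ℕ → ℕ → (Fin N → Bool) → ℝ)
    (pR : ℕ → ℕ → ℕ → (Fin N → Bool) → ℝ) : Prop :=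
  (∀ n ≤ N, ∀ m ∈ layer N n, pI 0 n m = 0) ∧
  (∀ n ≤ N, ∀ m ∈ layer N n, pI 1 n m = 1 / (N.choose n : ℝ)) ∧
  (∀ n ≤ N, ∀ r, 1 ≤ r → ∀ m ∈ layer N n, pR 1 n r m = 1 / (N.choose n : ℝ)) ∧
  (∀ k, 1 ≤ k → ∀ m ∈ layer N 0, pI k 0 m = 1) ∧
  (∀ k, 1 ≤ k → ∀ m ∈ layer N N, pI k N m = 1) ∧
  (∀ k, 2 ≤ k → ∀ r, ∀ m ∈ layer N 0, pR k 0 r m = 1) ∧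
  (∀ k, 2 ≤ k → ∀ r, ∀ m ∈ layer N N, pR k N r m = 1) ∧
  (∀ k, 2 ≤ k → ∀ n, 1 ≤ n → n ≤ N - 1 → ∀ m ∈ layer N n, pR k n 0 m = pI (k - 1) n m) ∧
  (∀ k, 2 ≤ k → ∀ n, 1 ≤ n → n ≤ N - 1 → ∀ r, 1 ≤ r → ∀ m ∈ layer N n,
    pR k n r m =
      (∑ l ∈ layer N (n - 1),
        pI k (n - 1) l * (muR ν pR k n (r - 1) / lamI lam f ζ pI k (n - 1)) *
          (upRate lam f ζ l m / (totalUp lam f ζ m + totalDown ν m))) +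
      (∑ l ∈ adjLayer (n + 1) m,
        pI (k - 1) (n + 1) l * (lamI lam f ζ pI (k - 1) n / muI ν pI (k - 1) (n + 1)) *
          (downRate ν l m / (totalUp lam f ζ m + totalDown ν m)))) ∧
  (∀ k, 2 ≤ k → ∀ n, 1 ≤ n → n ≤ N - 1 → ∀ m ∈ layer N n,
    Filter.Tendsto (fun r => pR k n r m) Filter.atTop (nhds (pI k n m)))

section Helpers

variable {N J : ℕ}

lemma mem_layer {m : Fin N → Bool} {n : ℕ} : m ∈ layer N n ↔ wt m = n := by
  simp [layer]

lemma wt_le (m : Fin N → Bool) : wt m ≤ N := by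
  simpa [wt] using (Finset.card_filter_le Finset.univ fun i => m i = true)

lemma exists_false_of_wt_lt {m : Fin N → Bool} (h : wt m < N) : ∃ i, m i = false := by
  by_contra hc
  push_neg at hc
  have : wt m = N := by
    have : (Finset.univ.filter fun i => m i = true) = Finset.univ := by
      ext i
      have := hc i
      simp only [Finset.mem_filter, Finset.mem_univ, true_and, iff_true]
      revert this; cases m i <;> simp
    simp [wt, this]
  omega

lemma wt_update_true (l : Fin N → Bool) (i : Fin N) (h : l i = false) :
    wt (Function.update l i true) = wt l + 1 := by
  have hfs : (Finset.univ.filter fun x => Function.update l i true x = true)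
      = insert i (Finset.univ.filter fun x => l x = true) := by
    ext x
    by_cases hx : x = i <;> simp [Function.update, hx]
  have hni : i ∉ Finset.univ.filter fun x => l x = true := by simp [h]
  simp [wt, hfs, Finset.card_insert_of_notMem hni]

lemma wt_update_false (l : Fin N → Bool) (i : Fin N) (h : l i = true) :
    wt (Function.update l i false) + 1 = wt l := by
  have hfs : (Finset.univ.filter fun x => Function.update l i false x = true)
      = (Finset.univ.filter fun x => l x = true).erase i := by
    ext x
    by_cases hx : x = i <;> simp [Function.update, hx]
  have hmi : i ∈ Finset.univ.filter fun x => l x = true := by simp [h]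
  have hpos : 0 < (Finset.univ.filter fun x => l x = true).card :=
    Finset.card_pos.mpr ⟨i, hmi⟩
  simp [wt, hfs, Finset.card_erase_of_mem hmi]
  omega

lemma card_layer (N n : ℕ) : (layer N n).card = N.choose n := by
  have h1 : ((Finset.univ : Finset (Fin N)).powersetCard n).card = N.choose n := by
    simp [Finset.card_powersetCard]
  rw [← h1]
  apply Finset.card_bij (fun B _ => Finset.univ.filter fun i => B i = true)
  · intro B hB
    simp only [Finset.mem_powersetCard]
    exact ⟨Finset.subset_univ _, mem_layer.mp hB⟩
  · intro B hB B' hB' hs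
    funext i
    have := Finset.ext_iff.mp hs i
    simp only [Finset.mem_filter, Finset.mem_univ, true_and] at this
    cases hBi : B i
    · cases hB'i : B' i
      · rfl
      · exact absurd (this.mpr hB'i) (by simp [hBi])
    · exact (this.mp hBi).symm
  · intro s hs
    refine ⟨fun i => decide (i ∈ s), ?_, ?_⟩
    · simp only [Finset.mem_powersetCard] at hs
      have hfs : (Finset.univ.filter fun i => decide (i ∈ s) = true) = s := by
        ext i; simp
      rw [mem_layer, wt, hfs]
      exact hs.2
    · ext i; simp

end Helpers
section Rates

variable {N J : ℕ}

lemma sum_dispatched (ζ : Fin J → (Fin N ≃ Fin N)) (l : Fin N → Bool)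
    (hfree : ∃ i, l i = false) (j : Fin J) (c : ℝ) :
    (∑ i : Fin N, if dispatched ζ l j i then c else 0) = c := by
  classical
  obtain ⟨i0, hi0⟩ := hfree
  set Tf : Finset (Fin N) := Finset.univ.filter fun h => l ((ζ j) h) = false with hTf
  have hne : Tf.Nonempty := ⟨(ζ j).symm i0, by simp [hTf, hi0]⟩
  set h0 := Tf.min' hne with hh0
  have hh0mem : h0 ∈ Tf := Tf.min'_mem hne
  have hlh0 : l ((ζ j) h0) = false := by
    simpa [hTf] using hh0mem
  have hdisp : dispatched ζ l j ((ζ j) h0) := by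
    constructor
    · exact hlh0
    · intro h hh
      rw [Equiv.symm_apply_apply] at hh
      by_contra hc
      have hmem : h ∈ Tf := by
        simp only [hTf, Finset.mem_filter, Finset.mem_univ, true_and]
        revert hc; cases l ((ζ j) h) <;> simp
      have := Tf.min'_le h hmem
      rw [← hh0] at this
      exact absurd (lt_of_le_of_lt this (by exact_mod_cast hh)) (lt_irrefl _)
  have huniq : ∀ i, dispatched ζ l j i → i = (ζ j) h0 := by
    intro i hi
    by_contra hne'
    set h := (ζ j).symm i with hh
    have hih : i = (ζ j) h := by simp [hh]
    have hhne : h ≠ h0 := by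
      intro hcon; exact hne' (by rw [hih, hcon])
    rcases lt_or_gt_of_ne hhne with hlt | hgt
    · -- h < h0, but l (ζ j h) = false contradicts minimality
      have hmem : h ∈ Tf := by
        simp only [hTf, Finset.mem_filter, Finset.mem_univ, true_and]
        rw [← hih]; exact hi.1
      have := Tf.min'_le h hmem
      rw [← hh0] at this
      exact absurd (lt_of_lt_of_le hlt this) (lt_irrefl _)
    · -- h0 < h: dispatched i forces l (ζ j h0) = true
      have := hi.2 h0 (by rw [← hh]; exact_mod_cast hgt)
      rw [hlh0] at this; exact absurd this (by simp)
  rw [Finset.sum_eq_single ((ζ j) h0)]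
  · simp [hdisp]
  · intro i _ hne'
    rw [if_neg]
    intro hi; exact hne' (huniq i hi)
  · intro h; exact absurd (Finset.mem_univ _) h

lemma totalUp_eq (lam : ℝ) (f : Fin J → ℝ) (ζ : Fin J → (Fin N ≃ Fin N))
    (hfsum : ∑ j, f j = 1) (m : Fin N → Bool) (hfree : ∃ i, m i = false) :
    totalUp lam f ζ m = lam := by
  classical
  unfold totalUp upRate
  rw [Finset.sum_comm]
  have step : ∀ i : Fin N,
      (∑ l : Fin N → Bool, if m i = false ∧ l = Function.update m i true then
        lam * ∑ j : Fin J, if dispatched ζ m j i then f j else 0 else 0)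
      = lam * ∑ j : Fin J, if dispatched ζ m j i then f j else 0 := by
    intro i
    by_cases hmi : m i = false
    · rw [Finset.sum_eq_single (Function.update m i true)]
      · simp [hmi]
      · intro l _ hl; rw [if_neg]; rintro ⟨_, h⟩; exact hl h
      · intro h; exact absurd (Finset.mem_univ _) h
    · have hz : ∀ j, ¬ dispatched ζ m j i := fun j hd => hmi hd.1
      simp [hmi, hz]
  rw [Finset.sum_congr rfl fun i _ => step i, ← Finset.mul_sum, Finset.sum_comm]
  rw [Finset.sum_congr rfl fun j (_ : j ∈ Finset.univ) => sum_dispatched ζ m hfree j (f j)]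
  rw [hfsum, mul_one]

lemma totalDown_eq (ν : Fin N → ℝ) (nu0 : ℝ) (hhom : ∀ i, ν i = nu0) (m : Fin N → Bool) :
    totalDown ν m = (wt m : ℝ) * nu0 := by
  unfold totalDown
  rw [Finset.sum_congr rfl fun i _ => by rw [hhom i]]
  rw [Finset.sum_ite, Finset.sum_const, Finset.sum_const_zero, add_zero, wt]
  simp [mul_comm]

lemma upRate_eq_zero (lam : ℝ) (f : Fin J → ℝ) (ζ : Fin J → (Fin N ≃ Fin N))
    {l m : Fin N → Bool} (h : ¬ ∃ i, l i = false ∧ m = Function.update l i true) :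
    upRate lam f ζ l m = 0 := by
  unfold upRate
  apply Finset.sum_eq_zero
  intro i _
  rw [if_neg]
  intro hc; exact h ⟨i, hc⟩

lemma downRate_eq_zero (ν : Fin N → ℝ)
    {l m : Fin N → Bool} (h : ¬ ∃ i, l i = true ∧ m = Function.update l i false) :
    downRate ν l m = 0 := by
  unfold downRate
  apply Finset.sum_eq_zero
  intro i _
  rw [if_neg]
  intro hc; exact h ⟨i, hc⟩

lemma sum_upRate (lam : ℝ) (f : Fin J → ℝ) (ζ : Fin J → (Fin N ≃ Fin N))
    (l : Fin N → Bool) :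
    ∑ m ∈ layer N (wt l + 1), upRate lam f ζ l m = totalUp lam f ζ l := by
  unfold totalUp
  symm
  rw [← Finset.sum_subset (Finset.subset_univ (layer N (wt l + 1)))]
  intro m _ hm
  apply upRate_eq_zero
  rintro ⟨i, hli, hmu⟩
  apply hm
  rw [mem_layer, hmu, wt_update_true l i hli]

lemma sum_downRate_univ (ν : Fin N → ℝ) (l : Fin N → Bool) :
    ∑ m : Fin N → Bool, downRate ν l m = totalDown ν l := by
  classical
  unfold downRate totalDown
  rw [Finset.sum_comm]
  apply Finset.sum_congr rfl
  intro i _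
  by_cases hli : l i = true
  · rw [Finset.sum_eq_single (Function.update l i false)]
    · simp [hli]
    · intro m _ hne; rw [if_neg]; rintro ⟨_, h⟩; exact hne h
    · intro h; exact absurd (Finset.mem_univ _) h
  · simp [hli]

lemma sum_downRate (ν : Fin N → ℝ) (l : Fin N → Bool) {n : ℕ} (hl : wt l = n + 1) :
    ∑ m ∈ layer N n, downRate ν l m = totalDown ν l := by
  rw [← sum_downRate_univ]
  symm
  rw [← Finset.sum_subset (Finset.subset_univ (layer N n))]
  intro m _ hm
  apply downRate_eq_zero
  rintro ⟨i, hli, hmu⟩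
  apply hm
  rw [mem_layer, hmu]
  have := wt_update_false l i hli
  omega

lemma downRate_eq_zero_of_not_adj (ν : Fin N → ℝ) {l m : Fin N → Bool}
    (h : ¬ (Finset.univ.filter fun i => l i ≠ m i).card = 1) :
    downRate ν l m = 0 := by
  apply downRate_eq_zero
  rintro ⟨i, hli, hmu⟩
  apply h
  have : (Finset.univ.filter fun x => l x ≠ m x) = {i} := by
    ext x
    by_cases hx : x = i
    · subst hx; simp [hmu, Function.update, hli]
    · simp [hmu, Function.update, hx]
  rw [this, Finset.card_singleton]

end Rates
lemma adj_sum {N : ℕ} (ν : Fin N → ℝ) (g : (Fin N → Bool) → ℝ) (n : ℕ) :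
    ∑ m ∈ layer N n, ∑ l ∈ adjLayer (n + 1) m, g l * downRate ν l m
    = ∑ l ∈ layer N (n + 1), g l * totalDown ν l := by
  classical
  have step1 : ∀ m ∈ layer N n,
      ∑ l ∈ adjLayer (n + 1) m, g l * downRate ν l m
      = ∑ l ∈ layer N (n + 1), g l * downRate ν l m := by
    intro m _
    unfold adjLayer
    rw [Finset.sum_filter]
    apply Finset.sum_congr rfl
    intro l _
    by_cases hd : (Finset.univ.filter fun i => l i ≠ m i).card = 1
    · rw [if_pos hd]
    · rw [if_neg hd, downRate_eq_zero_of_not_adj ν hd, mul_zero]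
  rw [Finset.sum_congr rfl step1, Finset.sum_comm]
  apply Finset.sum_congr rfl
  intro l hl
  rw [← Finset.mul_sum, sum_downRate ν l (mem_layer.mp hl)]
/-- Corollary (homogeneous setting), part 1: exact normalization at every iteration. -/
theorem cpu_homogeneous_normalization
    {N J : ℕ} (hN : 2 ≤ N) (hJ : 1 ≤ J)
    (lam : ℝ) (hlam : 0 < lam)
    (f : Fin J → ℝ) (hf : ∀ j, 0 ≤ f j) (hfsum : ∑ j, f j = 1)
    (ν : Fin N → ℝ) (hν : ∀ i, 0 < ν i)
    (ζ : Fin J → (Fin N ≃ Fin N))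
    (pI : ℕ → ℕ → (Fin N → Bool) → ℝ) (pR : ℕ → ℕ → ℕ → (Fin N → Bool) → ℝ)
    (hiter : IsCPUIterates lam f ζ ν pI pR)
    (nu0 : ℝ) (hnu0 : 0 < nu0) (hhom : ∀ i, ν i = nu0) :
    ∀ k, 1 ≤ k → ∀ n ≤ N, ∑ m ∈ layer N n, pI k n m = 1 := by
  obtain ⟨hI0, hI1, hR1, hk0, hkN, hRk0, hRkN, hRinit, hRrec, hRlim⟩ := hiter
  -- generic sum computations
  have hmuGen : ∀ (p : (Fin N → Bool) → ℝ) (n' : ℕ), (∑ m ∈ layer N n', p m) = 1 →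
      ∑ m ∈ layer N n', p m * totalDown ν m = (n' : ℝ) * nu0 := by
    intro p n' hS
    rw [Finset.sum_congr rfl fun m hm => by
      rw [totalDown_eq ν nu0 hhom m, mem_layer.mp hm]]
    rw [← Finset.sum_mul, hS, one_mul]
  have hlamGen : ∀ (p : (Fin N → Bool) → ℝ) (n' : ℕ), n' < N →
      (∑ m ∈ layer N n', p m) = 1 →
      ∑ m ∈ layer N n', p m * totalUp lam f ζ m = lam := by
    intro p n' hn' hS
    rw [Finset.sum_congr rfl fun m hm => by
      rw [totalUp_eq lam f ζ hfsum m
        (exists_false_of_wt_lt (by rw [mem_layer.mp hm]; exact hn'))]]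
    rw [← Finset.sum_mul, hS, one_mul]
  intro k hk
  induction k, hk using Nat.le_induction with
  | base =>
    intro n hn
    rw [Finset.sum_congr rfl fun m hm => hI1 n hn m hm, Finset.sum_const, card_layer,
      nsmul_eq_mul]
    have hc : (N.choose n : ℝ) ≠ 0 := Nat.cast_ne_zero.mpr (Nat.choose_pos hn).ne'
    field_simp
  | succ k hk1 ih =>
    have hK : 2 ≤ k + 1 := by omega
    intro n hn
    induction n with
    | zero =>
      rw [Finset.sum_congr rfl fun m hm => hk0 (k + 1) (by omega) m hm,
        Finset.sum_const, card_layer, Nat.choose_zero_right]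
      simp
    | succ n ihn =>
      by_cases hNn : n + 1 = N
      · rw [hNn, Finset.sum_congr rfl fun m hm => hkN (k + 1) (by omega) m hm,
          Finset.sum_const, card_layer, Nat.choose_self]
        simp
      · -- 1 ≤ n+1 ≤ N - 1
        have h1 : 1 ≤ n + 1 := by omega
        have h2 : n + 1 ≤ N - 1 := by omega
        have hSprev : ∑ m ∈ layer N n, pI (k + 1) n m = 1 := ihn (by omega)
        have hSk1 : ∑ m ∈ layer N (n + 1), pI k (n + 1) m = 1 := ih (n + 1) hn
        have hSk2 : ∑ m ∈ layer N (n + 2), pI k (n + 2) m = 1 := ih (n + 2) (by omega)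
        -- constants
        set D : ℝ := lam + ((n : ℝ) + 1) * nu0 with hD
        have hDne : D ≠ 0 := by positivity
        have hlamIKn : lamI lam f ζ pI (k + 1) n = lam := by
          unfold lamI; exact hlamGen _ n (by omega) hSprev
        have hlamIkn1 : lamI lam f ζ pI k (n + 1) = lam := by
          unfold lamI; exact hlamGen _ (n + 1) (by omega) hSk1
        have hmuIkn2 : muI ν pI k (n + 1 + 1) = ((n : ℝ) + 2) * nu0 := by
          unfold muI
          rw [show n + 1 + 1 = n + 2 from rfl, hmuGen _ (n + 2) hSk2]; push_cast; ring
        -- inner iterates all sum to 1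
        have hT : ∀ r, ∑ m ∈ layer N (n + 1), pR (k + 1) (n + 1) r m = 1 := by
          intro r
          induction r with
          | zero =>
            rw [Finset.sum_congr rfl fun m hm => hRinit (k + 1) hK (n + 1) h1 h2 m hm]
            simpa using hSk1
          | succ r ihr =>
            have hmuR : muR ν pR (k + 1) (n + 1) r = ((n : ℝ) + 1) * nu0 := by
              unfold muR; rw [hmuGen _ (n + 1) ihr]; push_cast; ring
            have hPer : ∀ m ∈ layer N (n + 1),
                (∑ l ∈ layer N n,
                  pI (k + 1) n l * (muR ν pR (k + 1) (n + 1) r / lamI lam f ζ pI (k + 1) n) *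
                    (upRate lam f ζ l m / (totalUp lam f ζ m + totalDown ν m)) +
                 ∑ l ∈ adjLayer (n + 1 + 1) m,
                  pI k (n + 1 + 1) l * (lamI lam f ζ pI k (n + 1) / muI ν pI k (n + 1 + 1)) *
                    (downRate ν l m / (totalUp lam f ζ m + totalDown ν m)))
                = (muR ν pR (k + 1) (n + 1) r / lamI lam f ζ pI (k + 1) n / D) *
                    (∑ l ∈ layer N n, pI (k + 1) n l * upRate lam f ζ l m) +
                  (lamI lam f ζ pI k (n + 1) / muI ν pI k (n + 1 + 1) / D) *
                    (∑ l ∈ adjLayer (n + 1 + 1) m, pI k (n + 1 + 1) l * downRate ν l m) := by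
              intro m hm
              have hupm : totalUp lam f ζ m = lam :=
                totalUp_eq lam f ζ hfsum m
                  (exists_false_of_wt_lt (by rw [mem_layer.mp hm]; omega))
              have hdnm : totalDown ν m = ((n : ℝ) + 1) * nu0 := by
                rw [totalDown_eq ν nu0 hhom m, mem_layer.mp hm]; push_cast; ring
              rw [hupm, hdnm, ← hD, Finset.mul_sum, Finset.mul_sum]
              congr 1 <;> exact Finset.sum_congr rfl fun l _ => by ring
            rw [Finset.sum_congr rfl fun m hm =>
              hRrec (k + 1) hK (n + 1) h1 h2 (r + 1) (by omega) m hm]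
            simp only [Nat.add_sub_cancel]
            rw [Finset.sum_congr rfl hPer, Finset.sum_add_distrib,
              ← Finset.mul_sum, ← Finset.mul_sum]
            -- compute the two double sums
            have hup2 : ∑ m ∈ layer N (n + 1),
                ∑ l ∈ layer N n, pI (k + 1) n l * upRate lam f ζ l m = lam := by
              rw [Finset.sum_comm]
              rw [Finset.sum_congr rfl fun l hl => by
                rw [← Finset.mul_sum,
                  show layer N (n + 1) = layer N (wt l + 1) by rw [mem_layer.mp hl],
                  sum_upRate lam f ζ l,
                  totalUp_eq lam f ζ hfsum l
                    (exists_false_of_wt_lt (by rw [mem_layer.mp hl]; omega))]]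
              rw [← Finset.sum_mul, hSprev, one_mul]
            have hdn2 : ∑ m ∈ layer N (n + 1),
                ∑ l ∈ adjLayer (n + 1 + 1) m, pI k (n + 1 + 1) l * downRate ν l m
                = ((n : ℝ) + 2) * nu0 := by
              rw [adj_sum ν (pI k (n + 1 + 1)) (n + 1)]
              rw [show n + 1 + 1 = n + 2 from rfl, hmuGen (pI k (n + 2)) (n + 2) hSk2]
              push_cast; ring
            rw [hup2, hdn2, hmuR, hlamIKn, hlamIkn1, hmuIkn2]
            have h2ne : ((n : ℝ) + 2) * nu0 ≠ 0 := by positivity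
            rw [hD] at hDne ⊢
            field_simp
            ring
        -- pass to the limit
        have htend : Filter.Tendsto (fun r => ∑ m ∈ layer N (n + 1), pR (k + 1) (n + 1) r m)
            Filter.atTop (nhds (∑ m ∈ layer N (n + 1), pI (k + 1) (n + 1) m)) :=
          tendsto_finset_sum _ fun m hm => hRlim (k + 1) hK (n + 1) h1 h2 m hm
        have hconst : Filter.Tendsto
            (fun r => ∑ m ∈ layer N (n + 1), pR (k + 1) (n + 1) r m)
            Filter.atTop (nhds 1) := by
          rw [show (fun r => ∑ m ∈ layer N (n + 1), pR (k + 1) (n + 1) r m)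
            = fun _ => (1 : ℝ) from funext hT]
          exact tendsto_const_nhds
        exact tendsto_nhds_unique htend hconst
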